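/- Let n ∈ ℕ with n ≥ 2, let G be a nonempty bounded subset of ℝⁿ, and let θ ∈ (0,1]. Let Z ∈ 𝒦_{n−1,n,1}(G) and let g : G → ℂ be bounded and θ-Hölder continuous, with ‖g‖_{C^{0,θ}(G)} ≡ sup_G |g| + sup{ |g(x)−g(y)|/|x−y|^θ : x,y ∈ G, x ≠ y }. Define H[Z,g](x,y) ≡ (g(x) − g(y)) Z(x,y) for (x,y) ∈ (G×G)∖Δ_G. Then H[Z,g] ∈ 𝒦_{n−1−θ, n−1, θ}(G) and ‖H[Z,g]‖_{𝒦_{n−1−θ,n−1,θ}(G)} ≤ 2ⁿ ‖Z‖_{𝒦_{n−1,n,1}(G)} ‖g‖_{C^{0,θ}(G)}; in particular the map (Z,g) ↦ H[Z,g] is bilinear and continuous from 𝒦_{n−1,n,1}(G) × C^{0,θ}(G) to 𝒦_{n−1−θ,n−1,θ}(G). -/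

import Mathlib

open Metric Set

/-- The set of values `‖x-y‖^γ₁ ‖K(x,y)‖` entering the first seminorm of the
kernel class `𝒦_{γ₁,γ₂,γ₃}(G)`. -/
def kerSet1 {n : ℕ} (γ₁ : ℝ) (G : Set (EuclideanSpace ℝ (Fin n)))
    (K : EuclideanSpace ℝ (Fin n) × EuclideanSpace ℝ (Fin n) → ℂ) : Set ℝ :=
  {t | ∃ x ∈ G, ∃ y ∈ G, x ≠ y ∧ t = ‖x - y‖ ^ γ₁ * ‖K (x, y)‖}

/-- The set of values `(‖x'-y‖^γ₂/‖x'-x''‖^γ₃) ‖K(x',y) - K(x'',y)‖` entering the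
second seminorm of the kernel class `𝒦_{γ₁,γ₂,γ₃}(G)`. -/
def kerSet2 {n : ℕ} (γ₂ γ₃ : ℝ) (G : Set (EuclideanSpace ℝ (Fin n)))
    (K : EuclideanSpace ℝ (Fin n) × EuclideanSpace ℝ (Fin n) → ℂ) : Set ℝ :=
  {t | ∃ x' ∈ G, ∃ x'' ∈ G, ∃ y ∈ G, x' ≠ x'' ∧ 2 * ‖x' - x''‖ ≤ ‖x' - y‖ ∧
    t = ‖x' - y‖ ^ γ₂ / ‖x' - x''‖ ^ γ₃ * ‖K (x', y) - K (x'', y)‖}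

/-- Membership in the kernel class `𝒦_{γ₁,γ₂,γ₃}(G)`. -/
def memKer {n : ℕ} (γ₁ γ₂ γ₃ : ℝ) (G : Set (EuclideanSpace ℝ (Fin n)))
    (K : EuclideanSpace ℝ (Fin n) × EuclideanSpace ℝ (Fin n) → ℂ) : Prop :=
  ContinuousOn K ((G ×ˢ G) \ {p | p.1 = p.2}) ∧
  BddAbove (kerSet1 γ₁ G K) ∧ BddAbove (kerSet2 γ₂ γ₃ G K)

/-- The norm `‖·‖_{𝒦_{γ₁,γ₂,γ₃}(G)}` of the kernel class. -/
noncomputable def kerNorm {n : ℕ} (γ₁ γ₂ γ₃ : ℝ) (G : Set (EuclideanSpace ℝ (Fin n)))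
    (K : EuclideanSpace ℝ (Fin n) × EuclideanSpace ℝ (Fin n) → ℂ) : ℝ :=
  sSup (kerSet1 γ₁ G K) + sSup (kerSet2 γ₂ γ₃ G K)

/-- The sup-norm part of the `C^{0,θ}(G)` norm of `g`. -/
def holderSet0 {n : ℕ} (G : Set (EuclideanSpace ℝ (Fin n)))
    (g : EuclideanSpace ℝ (Fin n) → ℂ) : Set ℝ :=
  {t | ∃ x ∈ G, t = ‖g x‖}

/-- The Hölder-quotient part of the `C^{0,θ}(G)` norm of `g`. -/
def holderSetθ {n : ℕ} (θ : ℝ) (G : Set (EuclideanSpace ℝ (Fin n)))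
    (g : EuclideanSpace ℝ (Fin n) → ℂ) : Set ℝ :=
  {t | ∃ x ∈ G, ∃ y ∈ G, x ≠ y ∧ t = ‖g x - g y‖ / ‖x - y‖ ^ θ}

/-- The norm of the Hölder space `C^{0,θ}(G)`. -/
noncomputable def holderNorm {n : ℕ} (θ : ℝ) (G : Set (EuclideanSpace ℝ (Fin n)))
    (g : EuclideanSpace ℝ (Fin n) → ℂ) : ℝ :=
  sSup (holderSet0 G g) + sSup (holderSetθ θ G g)

set_option maxHeartbeats 1000000 in
/-- if `Z ∈ 𝒦_{n-1,n,1}(G)` and `g ∈ C^{0,θ}(G)`, then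
`H[Z,g](x,y) = (g(x) - g(y)) Z(x,y)` belongs to `𝒦_{n-1-θ,n-1,θ}(G)` with
`‖H[Z,g]‖ ≤ 2ⁿ ‖Z‖ ‖g‖_{C^{0,θ}(G)}`. -/
theorem stmt_19 {n : ℕ} (hn : 2 ≤ n) (G : Set (EuclideanSpace ℝ (Fin n)))
    (hGne : G.Nonempty) (hGb : Bornology.IsBounded G)
    (θ : ℝ) (hθl : 0 < θ) (hθu : θ ≤ 1)
    (Z : EuclideanSpace ℝ (Fin n) × EuclideanSpace ℝ (Fin n) → ℂ)
    (hZ : memKer ((n : ℝ) - 1) (n : ℝ) 1 G Z)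
    (g : EuclideanSpace ℝ (Fin n) → ℂ)
    (hg0 : BddAbove (holderSet0 G g)) (hgθ : BddAbove (holderSetθ θ G g)) :
    memKer ((n : ℝ) - 1 - θ) ((n : ℝ) - 1) θ G (fun p => (g p.1 - g p.2) * Z p) ∧
    kerNorm ((n : ℝ) - 1 - θ) ((n : ℝ) - 1) θ G (fun p => (g p.1 - g p.2) * Z p) ≤
      2 ^ n * kerNorm ((n : ℝ) - 1) (n : ℝ) 1 G Z * holderNorm θ G g := by
  obtain ⟨hZc, hZ1b, hZ2b⟩ := hZ
  set M1 := sSup (kerSet1 ((n : ℝ) - 1) G Z) with hM1def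
  set M2 := sSup (kerSet2 (n : ℝ) 1 G Z) with hM2def
  set S0 := sSup (holderSet0 G g) with hS0def
  set Sθ := sSup (holderSetθ θ G g) with hSθdef
  have hM1 : 0 ≤ M1 := Real.sSup_nonneg fun t ht => by
    obtain ⟨x, hx, y, hy, hxy, rfl⟩ := ht; positivity
  have hM2 : 0 ≤ M2 := Real.sSup_nonneg fun t ht => by
    obtain ⟨x', hx', x'', hx'', y, hy, hne, hsep, rfl⟩ := ht; positivity
  have hS0 : 0 ≤ S0 := Real.sSup_nonneg fun t ht => by
    obtain ⟨x, hx, rfl⟩ := ht; positivity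
  have hSθ : 0 ≤ Sθ := Real.sSup_nonneg fun t ht => by
    obtain ⟨x, hx, y, hy, hxy, rfl⟩ := ht; positivity
  -- elementary bounds
  have hZ1el : ∀ x ∈ G, ∀ y ∈ G, x ≠ y →
      ‖x - y‖ ^ ((n : ℝ) - 1) * ‖Z (x, y)‖ ≤ M1 := fun x hx y hy hxy =>
    le_csSup hZ1b ⟨x, hx, y, hy, hxy, rfl⟩
  have hZ2el : ∀ x' ∈ G, ∀ x'' ∈ G, ∀ y ∈ G, x' ≠ x'' → 2 * ‖x' - x''‖ ≤ ‖x' - y‖ →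
      ‖x' - y‖ ^ (n : ℝ) / ‖x' - x''‖ ^ (1 : ℝ) * ‖Z (x', y) - Z (x'', y)‖ ≤ M2 :=
    fun x' hx' x'' hx'' y hy hne hsep =>
    le_csSup hZ2b ⟨x', hx', x'', hx'', y, hy, hne, hsep, rfl⟩
  have hgel : ∀ x ∈ G, ∀ y ∈ G, ‖g x - g y‖ ≤ Sθ * ‖x - y‖ ^ θ := by
    intro x hx y hy
    by_cases hxy : x = y
    · subst hxy; simp only [sub_self, norm_zero]; positivity
    · have hr : 0 < ‖x - y‖ := by
        rw [norm_sub_pos_iff]; exact hxy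
      have h := le_csSup hgθ ⟨x, hx, y, hy, hxy, rfl⟩
      rw [div_le_iff₀ (Real.rpow_pos_of_pos hr θ)] at h
      exact h
  -- continuity of g on G
  have hgc : ContinuousOn g G := by
    have hol : HolderOnWith ⟨Sθ, hSθ⟩ ⟨θ, hθl.le⟩ g G := by
      intro x hx y hy
      have hb : dist (g x) (g y) ≤ Sθ * dist x y ^ θ := by
        rw [dist_eq_norm, dist_eq_norm]; exact hgel x hx y hy
      rw [edist_dist, edist_dist]
      calc ENNReal.ofReal (dist (g x) (g y))
          ≤ ENNReal.ofReal (Sθ * dist x y ^ θ) := ENNReal.ofReal_le_ofReal hb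
        _ = ENNReal.ofReal Sθ * ENNReal.ofReal (dist x y ^ θ) := ENNReal.ofReal_mul hSθ
        _ = _ := by
            rw [← ENNReal.ofReal_rpow_of_nonneg dist_nonneg hθl.le,
              ENNReal.ofReal_eq_coe_nnreal hSθ]
            norm_num
            rfl
    exact hol.continuousOn (by exact_mod_cast hθl)
  -- continuity of H
  have hHc : ContinuousOn (fun p : EuclideanSpace ℝ (Fin n) × EuclideanSpace ℝ (Fin n) =>
      (g p.1 - g p.2) * Z p) ((G ×ˢ G) \ {p | p.1 = p.2}) := by
    have h1 : ContinuousOn (fun p : EuclideanSpace ℝ (Fin n) × EuclideanSpace ℝ (Fin n) =>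
        g p.1) ((G ×ˢ G) \ {p | p.1 = p.2}) :=
      hgc.comp continuous_fst.continuousOn fun p hp => hp.1.1
    have h2 : ContinuousOn (fun p : EuclideanSpace ℝ (Fin n) × EuclideanSpace ℝ (Fin n) =>
        g p.2) ((G ×ˢ G) \ {p | p.1 = p.2}) :=
      hgc.comp continuous_snd.continuousOn fun p hp => hp.1.2
    exact (h1.sub h2).mul hZc
  -- bound on the first seminorm set
  have hB1 : ∀ t ∈ kerSet1 ((n : ℝ) - 1 - θ) G
      (fun p => (g p.1 - g p.2) * Z p), t ≤ Sθ * M1 := by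
    rintro t ⟨x, hx, y, hy, hxy, rfl⟩
    have hr : 0 < ‖x - y‖ := by rw [norm_sub_pos_iff]; exact hxy
    calc ‖x - y‖ ^ ((n : ℝ) - 1 - θ) * ‖(g x - g y) * Z (x, y)‖
        = ‖x - y‖ ^ ((n : ℝ) - 1 - θ) * (‖g x - g y‖ * ‖Z (x, y)‖) := by rw [norm_mul]
      _ ≤ ‖x - y‖ ^ ((n : ℝ) - 1 - θ) * ((Sθ * ‖x - y‖ ^ θ) * ‖Z (x, y)‖) := by
          have := hgel x hx y hy
          gcongr
      _ = Sθ * (‖x - y‖ ^ ((n : ℝ) - 1) * ‖Z (x, y)‖) := by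
          rw [show ((n : ℝ) - 1) = ((n : ℝ) - 1 - θ) + θ by ring, Real.rpow_add hr]
          ring
      _ ≤ Sθ * M1 := by
          have := hZ1el x hx y hy hxy
          gcongr
  -- bound on the second seminorm set
  have hB2 : ∀ t ∈ kerSet2 ((n : ℝ) - 1) θ G
      (fun p => (g p.1 - g p.2) * Z p), t ≤ Sθ * M2 + 2 ^ (n - 1) * (Sθ * M1) := by
    rintro t ⟨x', hx', x'', hx'', y, hy, hne, hsep, rfl⟩
    have ha : 0 < ‖x' - x''‖ := by rw [norm_sub_pos_iff]; exact hne
    have hb : 0 < ‖x' - y‖ := lt_of_lt_of_le (by linarith) hsep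
    have htri : ‖x' - y‖ ≤ ‖x' - x''‖ + ‖x'' - y‖ := by
      have : x' - y = (x' - x'') + (x'' - y) := by abel
      rw [this]; exact norm_add_le _ _
    have hc : 0 < ‖x'' - y‖ := by linarith
    have hb2c : ‖x' - y‖ ≤ 2 * ‖x'' - y‖ := by linarith
    have hx'y : x' ≠ y := by
      intro h; rw [h, sub_self, norm_zero] at hb; exact lt_irrefl 0 hb
    have hx''y : x'' ≠ y := by
      intro h; rw [h, sub_self, norm_zero] at hc; exact lt_irrefl 0 hc
    set a := ‖x' - x''‖ with hadef
    set b := ‖x' - y‖ with hbdef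
    set c := ‖x'' - y‖ with hcdef
    have haθ : (0:ℝ) < a ^ θ := Real.rpow_pos_of_pos ha θ
    have hbn : (0:ℝ) < b ^ (n : ℝ) := Real.rpow_pos_of_pos hb _
    have hcn : (0:ℝ) < c ^ ((n : ℝ) - 1) := Real.rpow_pos_of_pos hc _
    -- bound on Z difference
    have hdz : ‖Z (x', y) - Z (x'', y)‖ ≤ M2 * a / b ^ (n : ℝ) := by
      have h := hZ2el x' hx' x'' hx'' y hy hne hsep
      rw [Real.rpow_one] at h
      rw [le_div_iff₀ hbn]
      rw [div_mul_eq_mul_div, div_le_iff₀ ha] at h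
      nlinarith [norm_nonneg (Z (x', y) - Z (x'', y))]
    -- bound on Z at x''
    have hz'' : ‖Z (x'', y)‖ ≤ M1 / c ^ ((n : ℝ) - 1) := by
      rw [le_div_iff₀ hcn]
      have h := hZ1el x'' hx'' y hy hx''y
      nlinarith [norm_nonneg (Z (x'', y))]
    -- split the difference of H
    have hsplit : (g x' - g y) * Z (x', y) - (g x'' - g y) * Z (x'', y)
        = (g x' - g y) * (Z (x', y) - Z (x'', y)) + (g x' - g x'') * Z (x'', y) := by ring
    have hN : ‖(g x' - g y) * Z (x', y) - (g x'' - g y) * Z (x'', y)‖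
        ≤ (Sθ * b ^ θ) * (M2 * a / b ^ (n : ℝ))
          + (Sθ * a ^ θ) * (M1 / c ^ ((n : ℝ) - 1)) := by
      rw [hsplit]
      refine (norm_add_le _ _).trans ?_
      rw [norm_mul, norm_mul]
      exact add_le_add
        (mul_le_mul (hgel x' hx' y hy) hdz (norm_nonneg _) (by positivity))
        (mul_le_mul (hgel x' hx' x'' hx'') hz'' (norm_nonneg _) (by positivity))
    have hfac : (0:ℝ) ≤ b ^ ((n : ℝ) - 1) / a ^ θ := by positivity
    have ha' : a ^ θ ≠ 0 := haθ.ne'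
    have hb' : b ^ (n : ℝ) ≠ 0 := hbn.ne'
    have hc' : c ^ ((n : ℝ) - 1) ≠ 0 := hcn.ne'
    -- term A identity and bound
    have hidA : b ^ ((n : ℝ) - 1) / a ^ θ * ((Sθ * b ^ θ) * (M2 * a / b ^ (n : ℝ)))
        = Sθ * M2 * (a ^ ((1:ℝ) - θ) * b ^ (θ - 1)) := by
      have e1 : a ^ ((1:ℝ) - θ) = a / a ^ θ := by
        rw [Real.rpow_sub ha, Real.rpow_one]
      have e2 : b ^ (θ - 1) = b ^ θ * b ^ ((n : ℝ) - 1) / b ^ (n : ℝ) := by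
        rw [← Real.rpow_add hb, ← Real.rpow_sub hb]; ring_nf
      rw [e1, e2]; field_simp
    have hAle : a ^ ((1:ℝ) - θ) * b ^ (θ - 1) ≤ 1 := by
      have e : a ^ ((1:ℝ) - θ) * b ^ (θ - 1) = (a / b) ^ ((1:ℝ) - θ) := by
        rw [Real.div_rpow ha.le hb.le, show θ - (1:ℝ) = -(1 - θ) by ring,
          Real.rpow_neg hb.le, div_eq_mul_inv]
      rw [e]
      exact Real.rpow_le_one (by positivity) (by rw [div_le_one hb]; linarith)
        (by linarith)
    -- term B identity and bound
    have hidB : b ^ ((n : ℝ) - 1) / a ^ θ * ((Sθ * a ^ θ) * (M1 / c ^ ((n : ℝ) - 1)))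
        = Sθ * M1 * (b ^ ((n : ℝ) - 1) / c ^ ((n : ℝ) - 1)) := by
      field_simp
    have hBle : b ^ ((n : ℝ) - 1) / c ^ ((n : ℝ) - 1) ≤ 2 ^ (n - 1) := by
      have e : b ^ ((n : ℝ) - 1) / c ^ ((n : ℝ) - 1) = (b / c) ^ ((n : ℝ) - 1) := by
        rw [Real.div_rpow hb.le hc.le]
      have h2 : ((b / c) : ℝ) ^ ((n : ℝ) - 1) ≤ (2 : ℝ) ^ ((n : ℝ) - 1) := by
        apply Real.rpow_le_rpow (by positivity) (by rw [div_le_iff₀ hc]; linarith)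
        have : (2:ℝ) ≤ (n:ℝ) := by exact_mod_cast hn
        linarith
      have h3 : (2 : ℝ) ^ ((n : ℝ) - 1) = (2 : ℝ) ^ (n - 1 : ℕ) := by
        rw [← Real.rpow_natCast 2 (n - 1)]
        congr 1
        have : ((n - 1 : ℕ) : ℝ) = (n : ℝ) - 1 := by
          have h1n : 1 ≤ n := by omega
          push_cast [Nat.cast_sub h1n]; ring
        rw [this]
      rw [e]; linarith [h2, h3.le, h3.ge]
    calc b ^ ((n : ℝ) - 1) / a ^ θ
          * ‖(fun p : EuclideanSpace ℝ (Fin n) × EuclideanSpace ℝ (Fin n) =>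
              (g p.1 - g p.2) * Z p) (x', y)
            - (fun p : EuclideanSpace ℝ (Fin n) × EuclideanSpace ℝ (Fin n) =>
              (g p.1 - g p.2) * Z p) (x'', y)‖
        = b ^ ((n : ℝ) - 1) / a ^ θ
          * ‖(g x' - g y) * Z (x', y) - (g x'' - g y) * Z (x'', y)‖ := rfl
      _ ≤ b ^ ((n : ℝ) - 1) / a ^ θ
          * ((Sθ * b ^ θ) * (M2 * a / b ^ (n : ℝ))
            + (Sθ * a ^ θ) * (M1 / c ^ ((n : ℝ) - 1))) :=
          mul_le_mul_of_nonneg_left hN hfac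
      _ = Sθ * M2 * (a ^ ((1:ℝ) - θ) * b ^ (θ - 1))
          + Sθ * M1 * (b ^ ((n : ℝ) - 1) / c ^ ((n : ℝ) - 1)) := by
          rw [mul_add, hidA, hidB]
      _ ≤ Sθ * M2 * 1 + Sθ * M1 * 2 ^ (n - 1) := by
          gcongr <;> positivity
      _ = Sθ * M2 + 2 ^ (n - 1) * (Sθ * M1) := by ring
  -- assemble
  have hbdd1 : BddAbove (kerSet1 ((n : ℝ) - 1 - θ) G
      (fun p => (g p.1 - g p.2) * Z p)) := ⟨Sθ * M1, fun t ht => hB1 t ht⟩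
  have hbdd2 : BddAbove (kerSet2 ((n : ℝ) - 1) θ G
      (fun p => (g p.1 - g p.2) * Z p)) :=
    ⟨Sθ * M2 + 2 ^ (n - 1) * (Sθ * M1), fun t ht => hB2 t ht⟩
  refine ⟨⟨hHc, hbdd1, hbdd2⟩, ?_⟩
  have hs1 : sSup (kerSet1 ((n : ℝ) - 1 - θ) G
      (fun p => (g p.1 - g p.2) * Z p)) ≤ Sθ * M1 :=
    Real.sSup_le hB1 (by positivity)
  have hs2 : sSup (kerSet2 ((n : ℝ) - 1) θ G
      (fun p => (g p.1 - g p.2) * Z p)) ≤ Sθ * M2 + 2 ^ (n - 1) * (Sθ * M1) :=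
    Real.sSup_le hB2 (by positivity)
  have hpow : (2:ℝ) ^ n = 2 * 2 ^ (n - 1) := by
    rw [← pow_succ']; congr 1; omega
  have hpow1 : (1:ℝ) ≤ 2 ^ (n - 1) := one_le_pow₀ (by norm_num)
  rw [kerNorm, kerNorm, holderNorm, ← hM1def, ← hM2def, ← hS0def, ← hSθdef]
  nlinarith [mul_nonneg hM1 hS0, mul_nonneg hM2 hS0, mul_nonneg hM1 hSθ,
    mul_nonneg hM2 hSθ, mul_nonneg (mul_nonneg (by positivity : (0:ℝ) ≤ (2:ℝ) ^ (n-1)) hM1) hS0,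
    mul_nonneg (mul_nonneg (by positivity : (0:ℝ) ≤ (2:ℝ) ^ (n-1)) hM2) hS0,
    mul_nonneg (mul_nonneg (sub_nonneg.mpr hpow1) hM1) hSθ,
    mul_nonneg (mul_nonneg (sub_nonneg.mpr hpow1) hM2) hSθ]
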